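/- arXiv:1310.4800 — 2 statements merged into one kernel-verified Lean document; each statement's English description precedes it below -/
import Mathlib

section
/- Let p > 1 and θ ∈ (0,1]. Then there exists a constant C > 0 such that for all a, b ∈ ℝⁿ one has | |a+b|^p − |a|^p − |b|^p | ≤ C ( |a|^{p−θ} |b|^θ + |a|^θ |b|^{p−θ} ). -/
open Real

/-- Tangent-line bound: for `0 ≤ y ≤ x` and `1 ≤ p`, `x^p - y^p ≤ p * x^(p-1) * (x - y)`. -/
lemma rpow_sub_rpow_le_aux {p : ℝ} (hp : 1 ≤ p) {x y : ℝ} (hy : 0 ≤ y) (hxy : y ≤ x) :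
    x ^ p - y ^ p ≤ p * x ^ (p - 1) * (x - y) := by
  have hx : 0 ≤ x := hy.trans hxy
  rcases eq_or_lt_of_le hx with h0 | h0
  · have hx0 : x = 0 := h0.symm
    have hy0 : y = 0 := le_antisymm (hx0 ▸ hxy) hy
    subst hx0; subst hy0
    simp [Real.zero_rpow (by linarith : p ≠ 0)]
  · have hs : -1 ≤ (y - x) / x := by
      rw [le_div_iff₀ h0]; nlinarith
    have key := one_add_mul_self_le_rpow_one_add hs hp
    have h1s : 1 + (y - x) / x = y / x := by field_simp; ring
    rw [h1s, Real.div_rpow hy hx] at key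
    have hxp : 0 < x ^ p := Real.rpow_pos_of_pos h0 p
    have hmain : x ^ p * (1 + p * ((y - x) / x)) ≤ y ^ p := by
      calc x ^ p * (1 + p * ((y - x) / x)) ≤ x ^ p * (y ^ p / x ^ p) :=
            mul_le_mul_of_nonneg_left key hxp.le
        _ = y ^ p := by field_simp
    have hxp1 : x ^ (p - 1) = x ^ p / x := Real.rpow_sub_one h0.ne' p
    rw [hxp1]
    have hxne : x ≠ 0 := h0.ne'
    have hexp : x ^ p * (1 + p * ((y - x) / x)) = x ^ p + p * (x ^ p / x) * (y - x) := by
      field_simp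
    rw [hexp] at hmain
    linarith

/-- Core scalar inequality. -/
lemma core_ineq (p θ : ℝ) (hp : 1 < p) (hθ0 : 0 < θ) (hθ1 : θ ≤ 1) {A B u : ℝ}
    (hB : 0 < B) (hBA : B ≤ A) (hu : 0 ≤ u) (huAB : u ≤ A + B) (hAuB : A ≤ u + B) :
    |u ^ p - A ^ p - B ^ p| ≤ (p * 2 ^ (p - 1) + 1) * (A ^ (p - θ) * B ^ θ) := by
  have hA : 0 < A := hB.trans_le hBA
  have hp1 : (0:ℝ) ≤ p - 1 := by linarith
  have hABpos : 0 < A + B := by linarith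
  -- step: |u^p - A^p| ≤ p * (A+B)^(p-1) * B
  have hABpow : (0:ℝ) ≤ (A + B) ^ (p - 1) := Real.rpow_nonneg hABpos.le _
  have h2 : |u ^ p - A ^ p| ≤ p * (A + B) ^ (p - 1) * B := by
    rcases le_total A u with hc | hc
    · have h1 := rpow_sub_rpow_le_aux hp.le hA.le hc
      have hle : u ^ (p - 1) ≤ (A + B) ^ (p - 1) := Real.rpow_le_rpow hu huAB hp1
      have hAu : 0 ≤ u ^ p - A ^ p := by
        have := Real.rpow_le_rpow hA.le hc (by linarith : (0:ℝ) ≤ p)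
        linarith
      rw [abs_of_nonneg hAu]
      have huA : u - A ≤ B := by linarith
      have huA0 : (0:ℝ) ≤ u - A := by linarith
      have hp0 : (0:ℝ) ≤ p := by linarith
      calc u ^ p - A ^ p ≤ p * u ^ (p - 1) * (u - A) := h1
        _ ≤ p * (A + B) ^ (p - 1) * B :=
          mul_le_mul (mul_le_mul_of_nonneg_left hle hp0) huA huA0
            (mul_nonneg hp0 hABpow)
    · have h1 := rpow_sub_rpow_le_aux hp.le hu hc
      have hle : A ^ (p - 1) ≤ (A + B) ^ (p - 1) :=
        Real.rpow_le_rpow hA.le (by linarith) hp1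
      have hAu : u ^ p - A ^ p ≤ 0 := by
        have := Real.rpow_le_rpow hu hc (by linarith : (0:ℝ) ≤ p)
        linarith
      rw [abs_of_nonpos hAu]
      have huA : A - u ≤ B := by linarith
      have huA0 : (0:ℝ) ≤ A - u := by linarith
      have hp0 : (0:ℝ) ≤ p := by linarith
      calc -(u ^ p - A ^ p) = A ^ p - u ^ p := by ring
        _ ≤ p * A ^ (p - 1) * (A - u) := h1
        _ ≤ p * (A + B) ^ (p - 1) * B :=
          mul_le_mul (mul_le_mul_of_nonneg_left hle hp0) huA huA0
            (mul_nonneg hp0 hABpow)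
  -- step: (A+B)^(p-1) ≤ 2^(p-1) * A^(p-1)
  have h3 : (A + B) ^ (p - 1) ≤ 2 ^ (p - 1) * A ^ (p - 1) := by
    have : (A + B) ^ (p - 1) ≤ (2 * A) ^ (p - 1) :=
      Real.rpow_le_rpow hABpos.le (by linarith) hp1
    rwa [Real.mul_rpow (by norm_num) hA.le] at this
  -- step: A^(p-1) * B ≤ A^(p-θ) * B^θ
  have h4 : A ^ (p - 1) * B ≤ A ^ (p - θ) * B ^ θ := by
    have hBθ : B ^ (1 - θ) ≤ A ^ (1 - θ) := Real.rpow_le_rpow hB.le hBA (by linarith)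
    have hBθ0 : (0:ℝ) ≤ B ^ θ := Real.rpow_nonneg hB.le θ
    have hA0 : (0:ℝ) ≤ A ^ (p - 1) := Real.rpow_nonneg hA.le (p - 1)
    calc A ^ (p - 1) * B = A ^ (p - 1) * (B ^ (1 - θ) * B ^ θ) := by
          rw [← Real.rpow_add hB]; norm_num
      _ ≤ A ^ (p - 1) * (A ^ (1 - θ) * B ^ θ) :=
          mul_le_mul_of_nonneg_left (mul_le_mul_of_nonneg_right hBθ hBθ0) hA0
      _ = A ^ (p - θ) * B ^ θ := by
          rw [← mul_assoc, ← Real.rpow_add hA]; ring_nf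
  -- step: B^p ≤ A^(p-θ) * B^θ
  have h5 : B ^ p ≤ A ^ (p - θ) * B ^ θ := by
    have e : B ^ p = B ^ (p - θ) * B ^ θ := by
      rw [← Real.rpow_add hB]; ring_nf
    rw [e]
    have hBθ : B ^ (p - θ) ≤ A ^ (p - θ) := Real.rpow_le_rpow hB.le hBA (by linarith)
    have := Real.rpow_nonneg hB.le θ
    nlinarith
  -- combine
  have htri : |u ^ p - A ^ p - B ^ p| ≤ |u ^ p - A ^ p| + B ^ p := by
    have hBp : (0:ℝ) ≤ B ^ p := Real.rpow_nonneg hB.le p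
    calc |u ^ p - A ^ p - B ^ p| ≤ |u ^ p - A ^ p| + |B ^ p| := abs_sub _ _
      _ = |u ^ p - A ^ p| + B ^ p := by rw [abs_of_nonneg hBp]
  have hpB : p * (A + B) ^ (p - 1) * B ≤ p * (2 ^ (p - 1) * A ^ (p - 1)) * B := by
    have hp0 : (0:ℝ) ≤ p := by linarith
    exact mul_le_mul_of_nonneg_right (mul_le_mul_of_nonneg_left h3 hp0) hB.le
  have h2pow : (0:ℝ) ≤ (2:ℝ) ^ (p - 1) := Real.rpow_nonneg (by norm_num) _
  nlinarith [mul_le_mul_of_nonneg_left h4 (mul_nonneg (by linarith : (0:ℝ) ≤ p) h2pow)]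

/-- Asymmetric norm version assuming `‖b‖ ≤ ‖a‖`. -/
lemma norm_aux (p θ : ℝ) (hp : 1 < p) (hθ0 : 0 < θ) (hθ1 : θ ≤ 1)
    {E : Type*} [NormedAddCommGroup E] (a b : E) (hba : ‖b‖ ≤ ‖a‖) :
    |‖a + b‖ ^ p - ‖a‖ ^ p - ‖b‖ ^ p| ≤
      (p * 2 ^ (p - 1) + 1) * (‖a‖ ^ (p - θ) * ‖b‖ ^ θ) := by
  by_cases hB0 : ‖b‖ = 0
  · have hb : b = 0 := norm_eq_zero.mp hB0
    subst hb
    simp [Real.zero_rpow (by linarith : p ≠ 0), Real.zero_rpow hθ0.ne']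
  · have hB : 0 < ‖b‖ := lt_of_le_of_ne (norm_nonneg b) (Ne.symm hB0)
    have huAB : ‖a + b‖ ≤ ‖a‖ + ‖b‖ := norm_add_le a b
    have hAuB : ‖a‖ ≤ ‖a + b‖ + ‖b‖ := by
      calc ‖a‖ = ‖(a + b) + (-b)‖ := by rw [add_neg_cancel_right]
        _ ≤ ‖a + b‖ + ‖-b‖ := norm_add_le _ _
        _ = ‖a + b‖ + ‖b‖ := by rw [norm_neg]
    exact core_ineq p θ hp hθ0 hθ1 hB hba (norm_nonneg _) huAB hAuB

/-- Let `p > 1` and `θ ∈ (0,1]`. Then there exists `C > 0` such that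
for all `a b ∈ ℝⁿ` (Euclidean norm),
`| ‖a+b‖^p − ‖a‖^p − ‖b‖^p | ≤ C (‖a‖^{p−θ} ‖b‖^θ + ‖a‖^θ ‖b‖^{p−θ})`. -/
theorem elementary_inequality (n : ℕ) (p θ : ℝ) (hp : 1 < p) (hθ0 : 0 < θ) (hθ1 : θ ≤ 1) :
    ∃ C : ℝ, 0 < C ∧ ∀ a b : EuclideanSpace ℝ (Fin n),
      |‖a + b‖ ^ p - ‖a‖ ^ p - ‖b‖ ^ p| ≤
        C * (‖a‖ ^ (p - θ) * ‖b‖ ^ θ + ‖a‖ ^ θ * ‖b‖ ^ (p - θ)) := by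
  refine ⟨p * 2 ^ (p - 1) + 1, ?_, ?_⟩
  · have : (0:ℝ) < 2 ^ (p - 1) := Real.rpow_pos_of_pos (by norm_num) _
    nlinarith
  · intro a b
    have hC : (0:ℝ) < p * 2 ^ (p - 1) + 1 := by
      have : (0:ℝ) < 2 ^ (p - 1) := Real.rpow_pos_of_pos (by norm_num) _
      nlinarith
    have hterm1 : (0:ℝ) ≤ ‖a‖ ^ (p - θ) * ‖b‖ ^ θ :=
      mul_nonneg (Real.rpow_nonneg (norm_nonneg _) _) (Real.rpow_nonneg (norm_nonneg _) _)
    have hterm2 : (0:ℝ) ≤ ‖a‖ ^ θ * ‖b‖ ^ (p - θ) :=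
      mul_nonneg (Real.rpow_nonneg (norm_nonneg _) _) (Real.rpow_nonneg (norm_nonneg _) _)
    rcases le_total ‖b‖ ‖a‖ with hc | hc
    · have h := norm_aux p θ hp hθ0 hθ1 a b hc
      nlinarith
    · have h := norm_aux p θ hp hθ0 hθ1 b a hc
      have hcomm : b + a = a + b := add_comm b a
      rw [hcomm] at h
      have habs : |‖a + b‖ ^ p - ‖b‖ ^ p - ‖a‖ ^ p| = |‖a + b‖ ^ p - ‖a‖ ^ p - ‖b‖ ^ p| := by
        ring_nf
      rw [habs] at h
      nlinarith
end

section
/- Let p > 1 and θ ∈ (0,1], and let e₁ ∈ ℝⁿ denote the first standard basis vector. Then the function f : ℝⁿ \ {0} → [0,∞) defined by f(a) = | |a+e₁|^p − |a|^p − 1 | / ( |a|^{p−θ} + |a|^θ ) is bounded on ℝⁿ \ {0}, i.e. there exists C > 0 such that f(a) ≤ C for all a ≠ 0. -/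
/-- Mean-value-type inequality for `rpow`, from Bernoulli's inequality. -/
lemma rpow_sub_rpow_le {p : ℝ} (hp : 1 ≤ p) {x y : ℝ} (hx : 0 ≤ x) (hxy : x ≤ y) :
    y ^ p - x ^ p ≤ p * y ^ (p - 1) * (y - x) := by
  rcases eq_or_lt_of_le (hx.trans hxy) with hy | hy
  · have hx0 : x = 0 := le_antisymm (hxy.trans hy.symm.le) hx
    simp [← hy, hx0, Real.zero_rpow (by linarith : p ≠ 0)]
  · have hs : (-1 : ℝ) ≤ x / y - 1 := by
      have : 0 ≤ x / y := div_nonneg hx hy.le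
      linarith
    have hb := one_add_mul_self_le_rpow_one_add hs hp
    rw [add_sub_cancel] at hb
    have hyp : 0 < y ^ p := Real.rpow_pos_of_pos hy p
    have key := mul_le_mul_of_nonneg_right hb hyp.le
    rw [Real.div_rpow hx hy.le, div_mul_cancel₀ _ hyp.ne'] at key
    have hyu : y ^ p = y * y ^ (p - 1) := by
      rw [← Real.rpow_one_add' hy.le (by linarith : (1:ℝ) + (p - 1) ≠ 0)]
      norm_num
    rw [hyu] at key ⊢
    have hrw : (1 + p * (x / y - 1)) * (y * y ^ (p - 1)) =
        y * y ^ (p - 1) + p * (x - y) * y ^ (p - 1) := by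
      field_simp
    rw [hrw] at key
    linarith

/-- Let `p > 1`, `θ ∈ (0,1]` and let `e₁` be the first standard basis
vector of `ℝⁿ` (`n ≥ 1`). Then the function
`f(a) = | ‖a+e₁‖^p − ‖a‖^p − 1 | / (‖a‖^{p−θ} + ‖a‖^θ)` is bounded on `ℝⁿ \ {0}`. -/
theorem f_bounded (n : ℕ) (p θ : ℝ) (hp : 1 < p) (hθ0 : 0 < θ) (hθ1 : θ ≤ 1) :
    ∃ C : ℝ, 0 < C ∧ ∀ a : EuclideanSpace ℝ (Fin (n + 1)), a ≠ 0 →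
      |‖a + EuclideanSpace.single (0 : Fin (n + 1)) (1 : ℝ)‖ ^ p - ‖a‖ ^ p - 1| /
          (‖a‖ ^ (p - θ) + ‖a‖ ^ θ) ≤ C := by
  have hp0 : (0:ℝ) < p := by linarith
  have h2 : (0:ℝ) < 2 ^ (p - 1) := Real.rpow_pos_of_pos two_pos _
  have h21 : (1:ℝ) ≤ 2 ^ (p - 1) := Real.one_le_rpow one_le_two (by linarith)
  refine ⟨p * 2 ^ (p - 1) + 1, by positivity, fun a ha => ?_⟩
  set e : EuclideanSpace ℝ (Fin (n + 1)) := EuclideanSpace.single (0 : Fin (n + 1)) (1 : ℝ)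
  have he : ‖e‖ = 1 := by simp [e, EuclideanSpace.norm_single]
  set r := ‖a‖ with hrdef
  set s := ‖a + e‖ with hsdef
  have hr : 0 < r := norm_pos_iff.mpr ha
  have hs0 : 0 ≤ s := norm_nonneg _
  have hsr : s ≤ r + 1 := by
    calc s ≤ ‖a‖ + ‖e‖ := norm_add_le _ _
    _ = r + 1 := by rw [he]
  have hrs : r ≤ s + 1 := by
    have h : a + e - e = a := add_sub_cancel_right a e
    calc r = ‖(a + e) - e‖ := by rw [h]
    _ ≤ ‖a + e‖ + ‖e‖ := norm_sub_le _ _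
    _ = s + 1 := by rw [he]
  have h1s : 1 ≤ s + r := by
    have h : a + e - a = e := by abel
    calc (1:ℝ) = ‖e‖ := he.symm
    _ = ‖(a + e) - a‖ := by rw [h]
    _ ≤ s + r := norm_sub_le _ _
  have hD : 0 < r ^ (p - θ) + r ^ θ := by positivity
  rw [div_le_iff₀ hD]
  rcases le_total r 1 with hr1 | hr1
  -- Case r ≤ 1
  · have hs2 : s ≤ 2 := by linarith
    have hkey : |s ^ p - 1| ≤ p * 2 ^ (p - 1) * r := by
      rcases le_total 1 s with h1 | h1
      · rw [abs_of_nonneg (by nlinarith [Real.one_le_rpow h1 hp0.le] : (0:ℝ) ≤ s ^ p - 1)]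
        have hm := rpow_sub_rpow_le hp.le (zero_le_one) h1
        rw [Real.one_rpow] at hm
        have hsle : s ^ (p - 1) ≤ 2 ^ (p - 1) :=
          Real.rpow_le_rpow hs0 hs2 (by linarith)
        have hmul : s ^ (p - 1) * (s - 1) ≤ 2 ^ (p - 1) * r :=
          mul_le_mul hsle (by linarith) (by linarith) h2.le
        have := mul_le_mul_of_nonneg_left hmul hp0.le
        linarith
      · rw [abs_of_nonpos (by nlinarith [Real.rpow_le_one hs0 h1 hp0.le] : s ^ p - 1 ≤ 0)]
        have hm := rpow_sub_rpow_le hp.le hs0 h1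
        simp only [Real.one_rpow] at hm
        have hmul : (1:ℝ) * (1 - s) ≤ 2 ^ (p - 1) * r := by
          have : (1:ℝ) - s ≤ r := by linarith
          have := mul_le_mul h21 this (by linarith) h2.le
          linarith
        have := mul_le_mul_of_nonneg_left hmul hp0.le
        linarith
    have hrp : r ^ p ≤ r ^ θ := Real.rpow_le_rpow_of_exponent_ge hr hr1 (by linarith)
    have hrθ : r ≤ r ^ θ := by
      have := Real.rpow_le_rpow_of_exponent_ge hr hr1 hθ1
      rwa [Real.rpow_one] at this
    have hst : |s ^ p - r ^ p - 1| ≤ |s ^ p - 1| + r ^ p := by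
      calc |s ^ p - r ^ p - 1| = |(s ^ p - 1) + (-(r ^ p))| := by ring_nf
      _ ≤ |s ^ p - 1| + |(-(r ^ p))| := abs_add_le _ _
      _ = |s ^ p - 1| + r ^ p := by rw [abs_neg, abs_of_nonneg (Real.rpow_nonneg hr.le p)]
    have hDpos : 0 ≤ r ^ (p - θ) := Real.rpow_nonneg hr.le _
    have hmul2 : p * 2 ^ (p - 1) * r ≤ p * 2 ^ (p - 1) * r ^ θ :=
      mul_le_mul_of_nonneg_left hrθ (by positivity)
    have hmul3 : 0 ≤ (p * 2 ^ (p - 1) + 1) * r ^ (p - θ) := by positivity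
    nlinarith
  -- Case 1 ≤ r
  · have hkey : |s ^ p - r ^ p| ≤ p * 2 ^ (p - 1) * r ^ (p - 1) := by
      have h0 : (0:ℝ) ≤ r ^ (p - 1) := Real.rpow_nonneg hr.le _
      have hmax : (r + 1) ^ (p - 1) ≤ 2 ^ (p - 1) * r ^ (p - 1) := by
        have h2r : r + 1 ≤ 2 * r := by linarith
        calc (r + 1) ^ (p - 1) ≤ (2 * r) ^ (p - 1) :=
          Real.rpow_le_rpow (by linarith) h2r (by linarith)
        _ = 2 ^ (p - 1) * r ^ (p - 1) := Real.mul_rpow (by norm_num) hr.le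
      rcases le_total s r with h1 | h1
      · rw [abs_of_nonpos (by nlinarith [Real.rpow_le_rpow hs0 h1 hp0.le] : s ^ p - r ^ p ≤ 0)]
        have hm := rpow_sub_rpow_le hp.le hs0 h1
        have hrle : r ^ (p - 1) ≤ (r + 1) ^ (p - 1) :=
          Real.rpow_le_rpow hr.le (by linarith) (by linarith)
        have hmul : r ^ (p - 1) * (r - s) ≤ 2 ^ (p - 1) * r ^ (p - 1) := by
          have h2' : r ^ (p - 1) * (r - s) ≤ r ^ (p - 1) * 1 :=
            mul_le_mul_of_nonneg_left (by linarith) h0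
          nlinarith
        have := mul_le_mul_of_nonneg_left hmul hp0.le
        linarith
      · rw [abs_of_nonneg (by nlinarith [Real.rpow_le_rpow hr.le h1 hp0.le] : (0:ℝ) ≤ s ^ p - r ^ p)]
        have hm := rpow_sub_rpow_le hp.le hr.le h1
        have hsle : s ^ (p - 1) ≤ (r + 1) ^ (p - 1) :=
          Real.rpow_le_rpow hs0 hsr (by linarith)
        have hmul : s ^ (p - 1) * (s - r) ≤ 2 ^ (p - 1) * r ^ (p - 1) := by
          have hss : (0:ℝ) ≤ s ^ (p - 1) := Real.rpow_nonneg hs0 _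
          have h2' : s ^ (p - 1) * (s - r) ≤ s ^ (p - 1) * 1 :=
            mul_le_mul_of_nonneg_left (by linarith) hss
          nlinarith
        have := mul_le_mul_of_nonneg_left hmul hp0.le
        linarith
    have hrp : r ^ (p - 1) ≤ r ^ (p - θ) :=
      Real.rpow_le_rpow_of_exponent_le hr1 (by linarith)
    have hrθ : 1 ≤ r ^ θ := Real.one_le_rpow hr1 hθ0.le
    have hst : |s ^ p - r ^ p - 1| ≤ |s ^ p - r ^ p| + 1 := by
      calc |s ^ p - r ^ p - 1| ≤ |s ^ p - r ^ p| + |(-1:ℝ)| := by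
            rw [sub_eq_add_neg (s ^ p - r ^ p)]; exact abs_add_le _ _
      _ = |s ^ p - r ^ p| + 1 := by norm_num
    have hmul2 : p * 2 ^ (p - 1) * r ^ (p - 1) ≤ p * 2 ^ (p - 1) * r ^ (p - θ) :=
      mul_le_mul_of_nonneg_left hrp (by positivity)
    have hmul3 : 0 ≤ (p * 2 ^ (p - 1) + 1) * r ^ θ - 1 := by
      have h := mul_le_mul_of_nonneg_left hrθ
        (by positivity : (0:ℝ) ≤ p * 2 ^ (p - 1) + 1)
      nlinarith
    have hmul4 : 0 ≤ r ^ (p - θ) := Real.rpow_nonneg hr.le _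
    nlinarith
end
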